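/- Let G be an abelian group, B a G-graded algebra over a field F whose centroid equals the sum of its homogeneous components, and let H = {g ∈ G : C(B)_g ≠ 0} be the support of the induced grading on the centroid. If B is graded-simple, then H is a subgroup of G and every nonzero homogeneous element of C(B) is invertible (C(B) is a graded-field). -/

import Mathlib

section

variable {G F M : Type*} [CommGroup G] [Field F] [AddCommGroup M] [Module F M]

/-- `c` belongs to the centroid of the algebra `(M, mul)`. -/
def IsCentroidElem' (mul : M →ₗ[F] M →ₗ[F] M) (c : M →ₗ[F] M) : Prop :=
  ∀ x y : M, c (mul x y) = mul (c x) y ∧ c (mul x y) = mul x (c y)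

/-- `c` is homogeneous of degree `h` with respect to the grading `𝒜`. -/
def IsHomogOfDeg' (𝒜 : G → Submodule F M) (h : G) (c : M →ₗ[F] M) : Prop :=
  ∀ g : G, ∀ x ∈ 𝒜 g, c x ∈ 𝒜 (h * g)

variable [DecidableEq G] (𝒜 : G → Submodule F M) [DirectSum.Decomposition 𝒜]

/-- A homogeneous linear map commutes with taking homogeneous components. -/
lemma aux_decompose_comm (c : M →ₗ[F] M) {h : G} (hc : IsHomogOfDeg' 𝒜 h c) (x : M) (g : G) :
    (DirectSum.decompose 𝒜 (c x) (h * g) : M) = c (DirectSum.decompose 𝒜 x g) := by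
  induction x using DirectSum.Decomposition.inductionOn 𝒜 with
  | zero => simp
  | @homogeneous i m =>
    obtain ⟨m, hm⟩ := m
    by_cases hgi : g = i
    · subst hgi
      rw [DirectSum.decompose_of_mem_same 𝒜 hm,
        DirectSum.decompose_of_mem_same 𝒜 (hc g m hm)]
    · rw [DirectSum.decompose_of_mem_ne 𝒜 hm (Ne.symm hgi),
        DirectSum.decompose_of_mem_ne 𝒜 (hc i m hm)
          (fun hh => hgi (mul_left_cancel hh).symm), map_zero]
  | add a b ha hb =>
    simp only [map_add, DirectSum.decompose_add, DirectSum.add_apply, Submodule.coe_add, ha, hb]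

variable (mul : M →ₗ[F] M →ₗ[F] M)

lemma aux_ne_zero [Nontrivial M] {f : M →ₗ[F] M} (hf : Function.Injective f) : f ≠ 0 := by
  intro h
  obtain ⟨x, hx⟩ := exists_ne (0 : M)
  exact hx (hf (by rw [h]; simp))

lemma aux_bij [Nontrivial M]
    (hsimple : ∀ I : Submodule F M,
      (∀ x ∈ I, ∀ g : G, ((DirectSum.decompose 𝒜 x g : 𝒜 g) : M) ∈ I) →
      (∀ a : M, ∀ x ∈ I, mul a x ∈ I ∧ mul x a ∈ I) → I = ⊥ ∨ I = ⊤)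
    (c : M →ₗ[F] M) (hc : IsCentroidElem' mul c) {g : G} (hg : IsHomogOfDeg' 𝒜 g c)
    (hne : c ≠ 0) : Function.Bijective c := by
  constructor
  · -- injective: kernel is a graded ideal
    rw [← LinearMap.ker_eq_bot]
    have hker := hsimple (LinearMap.ker c)
      (by
        intro x hx g'
        have hcomm := aux_decompose_comm 𝒜 c hg x g'
        rw [LinearMap.mem_ker] at hx ⊢
        rw [← hcomm, hx]
        simp)
      (by
        intro a x hx
        rw [LinearMap.mem_ker] at hx
        constructor <;> rw [LinearMap.mem_ker]
        · rw [(hc a x).2, hx]; simp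
        · rw [(hc x a).1, hx]; simp)
    rcases hker with h | h
    · exact h
    · exact absurd (LinearMap.ext fun x => by
        have : x ∈ LinearMap.ker c := h ▸ Submodule.mem_top
        simpa using this) hne
  · -- surjective: range is a graded ideal
    rw [← LinearMap.range_eq_top]
    have hran := hsimple (LinearMap.range c)
      (by
        rintro x ⟨y, rfl⟩ g'
        have hgg : g' = g * (g⁻¹ * g') := by group
        rw [hgg, aux_decompose_comm 𝒜 c hg y (g⁻¹ * g')]
        exact ⟨_, rfl⟩)
      (by
        rintro a x ⟨y, rfl⟩
        exact ⟨⟨_, (hc a y).2⟩, ⟨_, (hc y a).1⟩⟩)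
    rcases hran with h | h
    · exact absurd (LinearMap.range_eq_bot.mp h) hne
    · exact h

lemma aux_inv [Nontrivial M]
    (hsimple : ∀ I : Submodule F M,
      (∀ x ∈ I, ∀ g : G, ((DirectSum.decompose 𝒜 x g : 𝒜 g) : M) ∈ I) →
      (∀ a : M, ∀ x ∈ I, mul a x ∈ I ∧ mul x a ∈ I) → I = ⊥ ∨ I = ⊤)
    (g : G) (c : M →ₗ[F] M) (hc : IsCentroidElem' mul c) (hg : IsHomogOfDeg' 𝒜 g c)
    (hne : c ≠ 0) :
    ∃ d : M →ₗ[F] M, IsCentroidElem' mul d ∧ IsHomogOfDeg' 𝒜 g⁻¹ d ∧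
      d ∘ₗ c = LinearMap.id ∧ c ∘ₗ d = LinearMap.id := by
  classical
  have hbij := aux_bij 𝒜 mul hsimple c hc hg hne
  set e := LinearEquiv.ofBijective c hbij with he
  have hcd : ∀ z : M, c (e.symm z) = z := fun z => e.apply_symm_apply z
  refine ⟨e.symm, ?_, ?_, ?_, ?_⟩
  · -- centroid element
    intro x y
    simp only [LinearEquiv.coe_coe]
    constructor
    · apply hbij.injective
      rw [(hc (e.symm x) y).1]
      simp only [hcd]
    · apply hbij.injective
      rw [(hc x (e.symm y)).2]
      simp only [hcd]
  · -- homogeneous of degree g⁻¹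
    intro k x hx
    show ((e.symm : M →ₗ[F] M)) x ∈ 𝒜 (g⁻¹ * k)
    simp only [LinearEquiv.coe_coe]
    rw [← DirectSum.sum_support_decompose 𝒜 (e.symm x)]
    apply Submodule.sum_mem
    intro i _
    by_cases hik : i = g⁻¹ * k
    · rw [hik]; exact SetLike.coe_mem _
    · have hz : (DirectSum.decompose 𝒜 (e.symm x) i : M) = 0 := by
        apply hbij.injective
        rw [map_zero, ← aux_decompose_comm 𝒜 c hg _ i]
        rw [hcd]
        exact DirectSum.decompose_of_mem_ne 𝒜 hx
          (fun hh => hik (by rw [hh]; group))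
      rw [hz]; exact zero_mem _
  · ext x; exact e.symm_apply_apply x
  · ext x; exact e.apply_symm_apply x

/-- For a graded-simple algebra `B` whose centroid is spanned by its homogeneous
components, the support of the grading on the centroid is a subgroup of `G`, and every
nonzero homogeneous centroid element is invertible (the centroid is a graded-field). -/
theorem centroid_of_graded_simple_is_graded_field {G F M : Type*} [CommGroup G]
    [DecidableEq G] [Field F] [AddCommGroup M] [Module F M] [Nontrivial M]
    (𝒜 : G → Submodule F M) [DirectSum.Decomposition 𝒜]
    (mul : M →ₗ[F] M →ₗ[F] M)
    (hgr : ∀ g₁ g₂ : G, ∀ x ∈ 𝒜 g₁, ∀ y ∈ 𝒜 g₂, mul x y ∈ 𝒜 (g₁ * g₂))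
    -- B² = B :
    (hBB : Submodule.span F {z : M | ∃ x y : M, z = mul x y} = ⊤)
    -- no proper nonzero graded ideals:
    (hsimple : ∀ I : Submodule F M,
      (∀ x ∈ I, ∀ g : G, ((DirectSum.decompose 𝒜 x g : 𝒜 g) : M) ∈ I) →
      (∀ a : M, ∀ x ∈ I, mul a x ∈ I ∧ mul x a ∈ I) → I = ⊥ ∨ I = ⊤)
    -- the centroid is the sum of its homogeneous components:
    (hcspan : ∀ c : M →ₗ[F] M, IsCentroidElem' mul c →
      c ∈ Submodule.span F {c' : M →ₗ[F] M | ∃ h : G,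
        IsCentroidElem' mul c' ∧ IsHomogOfDeg' 𝒜 h c'}) :
    (∃ H : Subgroup G, (H : Set G) = {g : G | ∃ c : M →ₗ[F] M,
      IsCentroidElem' mul c ∧ IsHomogOfDeg' 𝒜 g c ∧ c ≠ 0}) ∧
    (∀ (g : G) (c : M →ₗ[F] M), IsCentroidElem' mul c → IsHomogOfDeg' 𝒜 g c → c ≠ 0 →
      ∃ d : M →ₗ[F] M, IsCentroidElem' mul d ∧ IsHomogOfDeg' 𝒜 g⁻¹ d ∧
        d ∘ₗ c = LinearMap.id ∧ c ∘ₗ d = LinearMap.id) := by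
  constructor
  · refine ⟨{
      carrier := {g : G | ∃ c : M →ₗ[F] M,
        IsCentroidElem' mul c ∧ IsHomogOfDeg' 𝒜 g c ∧ c ≠ 0}
      one_mem' := ?one
      mul_mem' := ?mul
      inv_mem' := ?inv }, rfl⟩
    case one =>
      exact ⟨LinearMap.id, fun x y => ⟨rfl, rfl⟩, fun k x hx => by simpa using hx,
        aux_ne_zero (f := LinearMap.id) fun a b hab => hab⟩
    case mul =>
      rintro ga gb ⟨c, hc, hgc, hcne⟩ ⟨c', hc', hgc', hcne'⟩
      refine ⟨c ∘ₗ c', ?_, ?_, ?_⟩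
      · intro x y
        constructor
        · show c (c' (mul x y)) = mul (c (c' x)) y
          rw [(hc' x y).1, (hc (c' x) y).1]
        · show c (c' (mul x y)) = mul x (c (c' y))
          rw [(hc' x y).2, (hc x (c' y)).2]
      · intro k x hx
        have := hgc (gb * k) (c' x) (hgc' k x hx)
        rwa [← mul_assoc] at this
      · exact aux_ne_zero
          (((aux_bij 𝒜 mul hsimple c hc hgc hcne).injective).comp
            ((aux_bij 𝒜 mul hsimple c' hc' hgc' hcne').injective))
    case inv =>
      rintro g ⟨c, hc, hgc, hcne⟩
      obtain ⟨d, hd, hgd, hdc, hcds⟩ := aux_inv 𝒜 mul hsimple g c hc hgc hcne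
      refine ⟨d, hd, hgd, ?_⟩
      intro hd0
      have : (LinearMap.id : M →ₗ[F] M) = 0 := by rw [← hdc, hd0]; simp
      obtain ⟨x, hx⟩ := exists_ne (0 : M)
      exact hx (by calc x = LinearMap.id x := rfl
                       _ = (0 : M →ₗ[F] M) x := by rw [this]
                       _ = 0 := rfl)
  · exact fun g c hc hg hne => aux_inv 𝒜 mul hsimple g c hc hg hne

end
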